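/- The transformations (M,γ) ↦ (α(γ)M' + cM'' + M''×h(γ), γ), where M'' = (M·γ)γ and M' = M − M'', form a group under composition: composing the transformations with parameters (α₁,c₁,h₁) and then (α₂,c₂,h₂) yields the transformation with parameters (α₁α₂, c₁c₂, α₂h₁ + c₁h₂). -/
import Mathlib


open Matrix

/-- The transformation M ↦ α(γ)M' + cM'' + M''×h(γ), where M'' = (M·γ)γ is the
component of M along γ and M' = M − M'' the tangential component. -/
noncomputable def T (α : (Fin 3 → ℝ) → ℝ) (c : ℝ) (h : (Fin 3 → ℝ) → (Fin 3 → ℝ))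
    (γ M : Fin 3 → ℝ) : Fin 3 → ℝ :=
  α γ • (M - (M ⬝ᵥ γ) • γ) + c • ((M ⬝ᵥ γ) • γ)
    + crossProduct ((M ⬝ᵥ γ) • γ) (h γ)

/-- the transformations (M,γ) ↦ (α(γ)M' + cM'' + M''×h(γ), γ) form a
group under composition: composing the transformations with parameters (α₁,c₁,h₁) and
then (α₂,c₂,h₂) yields the transformation with parameters (α₁α₂, c₁c₂, α₂h₁ + c₁h₂). -/
theorem statement11
    (α₁ α₂ : (Fin 3 → ℝ) → ℝ) (c₁ c₂ : ℝ)
    (h₁ h₂ : (Fin 3 → ℝ) → (Fin 3 → ℝ))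
    (hα₁ : ∀ γ, 0 < α₁ γ) (hα₂ : ∀ γ, 0 < α₂ γ)
    (hc₁ : c₁ ≠ 0) (hc₂ : c₂ ≠ 0) :
    ∀ γ : Fin 3 → ℝ, γ ⬝ᵥ γ = 1 → ∀ M : Fin 3 → ℝ,
      T α₂ c₂ h₂ γ (T α₁ c₁ h₁ γ M)
        = T (fun γ => α₁ γ * α₂ γ) (c₁ * c₂)
            (fun γ => α₂ γ • h₁ γ + c₁ • h₂ γ) γ M := by
  intro γ hγ M
  have hcr : ∀ (t : ℝ) (w : Fin 3 → ℝ),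
      crossProduct (t • γ) w = t • crossProduct γ w := by
    intro t w
    rw [LinearMap.map_smul, LinearMap.smul_apply]
  have h0 : ∀ w : Fin 3 → ℝ, crossProduct γ w ⬝ᵥ γ = 0 := by
    intro w
    rw [dotProduct_comm, dot_self_cross]
  have key : T α₁ c₁ h₁ γ M ⬝ᵥ γ = c₁ * (M ⬝ᵥ γ) := by
    simp only [T, add_dotProduct, smul_dotProduct, sub_dotProduct, hγ, hcr, h0,
      smul_eq_mul, mul_zero]
    ring
  conv_lhs => rw [T, key]
  simp only [T, hcr, map_add, LinearMap.map_smul]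
  simp only [LinearMap.smul_apply]
  module
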